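/- For every indecomposable countable ordinal β, the principle TWCG_β holds if and only if the principle TWCG^{ℵ₀}_β holds. -/

import Mathlib

open Ordinal Set

/-- The first uncountable ordinal, `ω₁`. -/
noncomputable def omega1 : Ordinal := (Cardinal.aleph 1).ord

/-- The order type of a set of ordinals: the unique ordinal `o` (when it
exists) such that `A` is order-isomorphic to `Set.Iio o`. -/
noncomputable def otype (A : Set Ordinal) : Ordinal :=
  sInf {o : Ordinal | Nonempty (Set.Iio o ≃o A)}

/-- `A` is closed in `δ`: the supremum of every nonempty subset of `A`,
whenever it is less than `δ`, belongs to `A`. -/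
def IsClosedIn (A : Set Ordinal) (δ : Ordinal) : Prop :=
  ∀ s ⊆ A, s.Nonempty → sSup s < δ → sSup s ∈ A

/-- `A` is club in `δ`: a subset of `δ`, unbounded in `δ` and closed in `δ`. -/
def IsClubIn (A : Set Ordinal) (δ : Ordinal) : Prop :=
  A ⊆ Set.Iio δ ∧ sSup A = δ ∧ IsClosedIn A δ

/-- `β` is (additively) indecomposable: `β > 0` and `γ + β = β` for all `γ < β`. -/
def Indecomposable (β : Ordinal) : Prop := 0 < β ∧ ∀ γ < β, γ + β = β

/-- A `β`-ladder system: for every nonzero `δ < ω₁` divisible by `β`,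
`A δ` is club in `δ` with order type `β`. -/
def IsLadderSystem (β : Ordinal) (A : Ordinal → Set Ordinal) : Prop :=
  ∀ δ, δ < omega1 → δ ≠ 0 → β ∣ δ → IsClubIn (A δ) δ ∧ otype (A δ) = β

/-- Thinness of a ladder system: for every `γ < ω₁`, the family
`{A δ ∩ γ : δ < ω₁}` is countable. -/
def IsThinLadder (A : Ordinal → Set Ordinal) : Prop :=
  ∀ γ < omega1, {s : Set Ordinal | ∃ δ < omega1, s = A δ ∩ Set.Iio γ}.Countable

/-- The `β`-Thin Weak Club Guessing principle `TWCG_β`. -/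
def TWCG (β : Ordinal) : Prop :=
  ∃ A : Ordinal → Set Ordinal, IsLadderSystem β A ∧ IsThinLadder A ∧
    ∀ D : Set Ordinal, IsClubIn D omega1 →
      ∃ δ ∈ D, δ ≠ 0 ∧ β ∣ δ ∧ otype (A δ ∩ D) = β

/-- A `(β, ℵ₀)`-system: for every `n < ω` and every nonzero `δ < ω₁`
divisible by `β`, `A n δ` is club in `δ` with order type `β`. -/
def IsSystem (β : Ordinal) (A : ℕ → Ordinal → Set Ordinal) : Prop :=
  ∀ (n : ℕ) (δ : Ordinal), δ < omega1 → δ ≠ 0 → β ∣ δ →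
    IsClubIn (A n δ) δ ∧ otype (A n δ) = β

/-- Thinness of a `(β, ℵ₀)`-system: for every `γ < ω₁`, the family
`{A n δ ∩ γ : n < ω, δ < ω₁}` is countable. -/
def IsThinSystem (A : ℕ → Ordinal → Set Ordinal) : Prop :=
  ∀ γ < omega1,
    {s : Set Ordinal | ∃ (n : ℕ), ∃ δ < omega1, s = A n δ ∩ Set.Iio γ}.Countable

/-- The principle `TWCG^{ℵ₀}_β`. -/
def TWCGomega (β : Ordinal) : Prop :=
  ∃ A : ℕ → Ordinal → Set Ordinal, IsSystem β A ∧ IsThinSystem A ∧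
    ∀ D : Set Ordinal, IsClubIn D omega1 →
      ∃ δ ∈ D, δ ≠ 0 ∧ β ∣ δ ∧ ∃ n : ℕ, otype (A n δ ∩ D) = β

/-! ### Auxiliary order-type machinery -/

universe u

instance (o : Ordinal.{u}) : IsWellOrder o.ToType (· < ·) := isWellOrder_lt

/-- The order type of a set of ordinals, as the `Ordinal.type` of the induced
well-order on the subtype (one universe up). -/
noncomputable def stype (X : Set Ordinal.{u}) : Ordinal.{u + 1} :=
  Ordinal.type ((· < ·) : X → X → Prop)

lemma stype_mono {X Y : Set Ordinal.{u}} (h : X ⊆ Y) : stype X ≤ stype Y := by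
  refine RelEmbedding.ordinal_type_le
    ⟨⟨fun x => ⟨x.1, h x.2⟩, by intro a b hab; injection hab with h; exact Subtype.ext h⟩, Iff.rfl⟩

lemma iso_Iio_stype (X : Set Ordinal.{u}) : Nonempty (Set.Iio (stype X) ≃o X) := by
  have h : Ordinal.type ((· < ·) : (stype X).ToType → (stype X).ToType → Prop)
      = Ordinal.type ((· < ·) : X → X → Prop) := Ordinal.type_toType _
  obtain ⟨e2⟩ := Ordinal.type_eq.1 h
  exact ⟨(Ordinal.ToType.mk (o := stype X)).trans (OrderIso.ofRelIsoLT e2)⟩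

lemma key_lift {X : Set Ordinal.{u}} {o : Ordinal.{u}} (e : Set.Iio o ≃o X) :
    Ordinal.lift.{u + 1} o = stype X := by
  have h1 : stype (Set.Iio o) = stype X := Ordinal.type_eq.2 ⟨e.toRelIsoLT⟩
  have h2 := (Ordinal.ToType.mk (o := o)).toRelIsoLT.ordinal_lift_type_eq
  rw [Ordinal.type_toType, Ordinal.lift_id'.{u, u + 1}] at h2
  exact (h2.symm.trans h1)

/-- The canonical iso between `Iio a` and `Iio (lift a)`. -/
noncomputable def liftIioIso (a : Ordinal.{u}) :
    Set.Iio a ≃o Set.Iio (Ordinal.lift.{u + 1} a) := by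
  refine StrictMono.orderIsoOfSurjective
    (fun x => ⟨Ordinal.lift.{u + 1} x.1, Ordinal.lift_lt.2 x.2⟩) ?_ ?_
  · intro x y hxy
    exact Ordinal.lift_lt.2 hxy
  · rintro ⟨y, hy⟩
    obtain ⟨x, rfl⟩ := Ordinal.mem_range_lift_of_le hy.le
    exact ⟨⟨x, Ordinal.lift_lt.1 hy⟩, rfl⟩

lemma otype_of_iso {X : Set Ordinal.{u}} {o : Ordinal.{u}} (e : Set.Iio o ≃o X) :
    otype X = o := by
  have hset : {o' : Ordinal.{u} | Nonempty (Set.Iio o' ≃o X)} = {o} := by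
    ext o'
    constructor
    · rintro ⟨e'⟩
      exact Ordinal.lift_inj.1 ((key_lift e').trans (key_lift e).symm)
    · rintro rfl
      exact ⟨e⟩
  rw [otype, hset, csInf_singleton]

lemma otype_extract {X : Set Ordinal.{u}} {b : Ordinal.{u}} (h : otype X = b)
    (hb : b ≠ 0) : Nonempty (Set.Iio b ≃o X) := by
  by_cases hne : {o : Ordinal.{u} | Nonempty (Set.Iio o ≃o X)}.Nonempty
  · have h2 : Nonempty (Set.Iio (otype X) ≃o X) := csInf_mem hne
    rwa [h] at h2
  · exfalso
    apply hb
    rw [← h, otype, Set.not_nonempty_iff_eq_empty.1 hne]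
    exact Ordinal.sInf_empty

lemma exists_iso_of_subset {Y : Set Ordinal.{u}} {b : Ordinal.{u}}
    (e : Set.Iio b ≃o Y) {X : Set Ordinal.{u}} (hX : X ⊆ Y) :
    ∃ a ≤ b, Nonempty (Set.Iio a ≃o X) := by
  have h1 : stype X ≤ Ordinal.lift.{u + 1} b := (stype_mono hX).trans_eq (key_lift e).symm
  obtain ⟨a, ha⟩ := Ordinal.mem_range_lift_of_le h1
  refine ⟨a, Ordinal.lift_le.1 (ha.symm ▸ h1), ?_⟩
  obtain ⟨e2⟩ := iso_Iio_stype X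
  have e3 : Set.Iio (Ordinal.lift.{u + 1} a) ≃o X := by rw [ha]; exact e2
  exact ⟨(liftIioIso a).trans e3⟩

lemma le_of_iso_subset {X Y : Set Ordinal.{u}} {b c : Ordinal.{u}}
    (eX : Set.Iio b ≃o X) (h : X ⊆ Y) (eY : Set.Iio c ≃o Y) : b ≤ c := by
  have : Ordinal.lift.{u + 1} b ≤ Ordinal.lift.{u + 1} c := by
    rw [key_lift eX, key_lift eY]
    exact stype_mono h
  exact Ordinal.lift_le.1 this

/-! ### Club machinery -/

lemma csup_lt_omega1 (f : ℕ → Ordinal.{u}) (h : ∀ n, f n < omega1) :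
    (⨆ n, f n) < omega1 := by
  refine Ordinal.iSup_lt_ord_lift ?_ h
  rw [show omega1.{u} = (Cardinal.aleph 1).ord from rfl, Cardinal.isRegular_aleph_one.cof_eq]
  simpa using Cardinal.aleph0_lt_aleph_one

lemma isClubIn_iInter {D : ℕ → Set Ordinal.{u}} (hD : ∀ n, IsClubIn (D n) omega1) :
    IsClubIn (⋂ n, D n) omega1 := by
  have hsub : (⋂ n, D n) ⊆ Set.Iio omega1 := (Set.iInter_subset D 0).trans (hD 0).1
  have hunb : ∀ γ < omega1.{u}, ∃ x ∈ ⋂ n, D n, γ < x := by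
    intro γ hγ
    set g : ℕ → Ordinal.{u} → Ordinal.{u} := fun n x => sInf (D n ∩ Set.Ioi x) with hg
    have hgmem : ∀ n x, x < omega1 → g n x ∈ D n ∩ Set.Ioi x := by
      intro n x hx
      apply csInf_mem
      obtain ⟨y, hy, hxy⟩ := exists_lt_of_lt_csSup' ((hD n).2.1.symm ▸ hx)
      exact ⟨y, hy, hxy⟩
    let x : ℕ → Ordinal.{u} := fun k => Nat.rec γ (fun _ xk => ⨆ n, g n xk) k
    have hx0 : x 0 = γ := rfl
    have hxsucc : ∀ k, x (k + 1) = ⨆ n, g n (x k) := fun k => rfl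
    have hxlt : ∀ k, x k < omega1 := by
      intro k
      induction k with
      | zero => exact hγ
      | succ k ih =>
        rw [hxsucc]
        exact csup_lt_omega1 _ (fun n => (hD n).1 (hgmem n _ ih).1)
    have hbdd : ∀ k, BddAbove (Set.range fun n => g n (x k)) := fun k =>
      ⟨omega1, by rintro _ ⟨n, rfl⟩; exact le_of_lt ((hD n).1 (hgmem n _ (hxlt k)).1)⟩
    have hglex : ∀ n k, g n (x k) ≤ x (k + 1) := fun n k => by
      rw [hxsucc]; exact le_ciSup (hbdd k) n
    have hxmono : ∀ k, x k < x (k + 1) := fun k =>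
      lt_of_lt_of_le (hgmem 0 _ (hxlt k)).2 (hglex 0 k)
    have hxbdd : BddAbove (Set.range x) := ⟨omega1, by rintro _ ⟨k, rfl⟩; exact (hxlt k).le⟩
    have hxleδ : ∀ k, x k ≤ ⨆ k, x k := fun k => le_ciSup hxbdd k
    have hδlt : (⨆ k, x k) < omega1 := csup_lt_omega1 _ hxlt
    have hγδ : γ < ⨆ k, x k := lt_of_lt_of_le (hx0 ▸ hxmono 0) (hxleδ 1)
    refine ⟨⨆ k, x k, ?_, hγδ⟩
    rw [Set.mem_iInter]
    intro n
    set s := Set.range (fun k => g n (x k)) with hs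
    have hssub : s ⊆ D n := by rintro _ ⟨k, rfl⟩; exact (hgmem n _ (hxlt k)).1
    have hsbdd : BddAbove s := ⟨omega1, by
      rintro _ ⟨k, rfl⟩; exact le_of_lt ((hD n).1 (hgmem n _ (hxlt k)).1)⟩
    have hsup : sSup s = ⨆ k, x k := by
      apply le_antisymm
      · apply csSup_le'
        rintro _ ⟨k, rfl⟩
        exact (hglex n k).trans (hxleδ (k + 1))
      · refine ciSup_le fun k => ?_
        exact le_trans (le_of_lt (hgmem n _ (hxlt k)).2) (le_csSup hsbdd ⟨k, rfl⟩)
    have := (hD n).2.2 s hssub ⟨g n (x 0), ⟨0, rfl⟩⟩ (by rw [hsup]; exact hδlt)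
    rwa [hsup] at this
  refine ⟨hsub, ?_, ?_⟩
  · apply le_antisymm
    · exact csSup_le' (fun x hx => (hsub hx).le)
    · apply le_of_forall_lt
      intro c hc
      obtain ⟨x, hx, hcx⟩ := hunb c hc
      exact lt_of_lt_of_le hcx (le_csSup ⟨omega1, fun y hy => (hsub hy).le⟩ hx)
  · intro s hssub hsne hslt
    rw [Set.mem_iInter]
    intro n
    exact (hD n).2.2 s (hssub.trans (Set.iInter_subset D n)) hsne hslt

/-- For every indecomposable countable ordinal `β`,
`TWCG_β` holds iff `TWCG^{ℵ₀}_β` holds. -/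
theorem twcg_iff_twcg_omega (β : Ordinal) (hβ : Indecomposable β)
    (hβω : β < omega1) : TWCG β ↔ TWCGomega β := by
  constructor
  · rintro ⟨A, h1, h2, h3⟩
    refine ⟨fun _ δ => A δ, fun n δ hδ h0 hd => h1 δ hδ h0 hd, ?_, fun D hD => ?_⟩
    · intro γ hγ
      refine (h2 γ hγ).mono ?_
      rintro s ⟨n, δ, hδ, rfl⟩
      exact ⟨δ, hδ, rfl⟩
    · obtain ⟨δ, h4, h5, h6, h7⟩ := h3 D hD
      exact ⟨δ, h4, h5, h6, 0, h7⟩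
  · rintro ⟨A, hsys, hthin, hguess⟩
    by_cases hex : ∃ n : ℕ, ∀ D : Set Ordinal, IsClubIn D omega1 →
        ∃ δ ∈ D, δ ≠ 0 ∧ β ∣ δ ∧ otype (A n δ ∩ D) = β
    · obtain ⟨n, hn⟩ := hex
      refine ⟨A n, fun δ h1 h2 h3 => hsys n δ h1 h2 h3, ?_, hn⟩
      intro γ hγ
      refine (hthin γ hγ).mono ?_
      rintro s ⟨δ, hδ, rfl⟩
      exact ⟨n, δ, hδ, rfl⟩
    · exfalso
      push_neg at hex
      choose Dn hclub hbad using hex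
      obtain ⟨δ, hδmem, hδ0, hdvd, n, hot⟩ := hguess (⋂ n, Dn n) (isClubIn_iInter hclub)
      have hδn : δ ∈ Dn n := Set.mem_iInter.1 hδmem n
      have hδlt : δ < omega1 := (isClubIn_iInter hclub).1 hδmem
      have hAot : otype (A n δ) = β := (hsys n δ hδlt hδ0 hdvd).2
      have hβ0 : β ≠ 0 := hβ.1.ne'
      obtain ⟨e⟩ := otype_extract hAot hβ0
      obtain ⟨eD⟩ := otype_extract hot hβ0
      obtain ⟨a, hab, ⟨ea⟩⟩ :=
        exists_iso_of_subset e (Set.inter_subset_left : A n δ ∩ Dn n ⊆ A n δ)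
      have h1 : otype (A n δ ∩ Dn n) = a := otype_of_iso ea
      have h2 : β ≤ a :=
        le_of_iso_subset eD (Set.inter_subset_inter_right _ (Set.iInter_subset Dn n)) ea
      exact hbad n δ hδn hδ0 hdvd (h1.trans (le_antisymm hab h2))
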